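/- Every subset of ℤ that is definable without parameters in the first-order language with one binary relation symbol, interpreted as the order ≤ on ℤ, is either empty or all of ℤ. -/

import Mathlib

open FirstOrder Language

attribute [local instance] FirstOrder.Language.orderStructure

theorem statement13 (s : Set ℤ) (h : Set.Definable₁ ∅ Language.order s) :
    s = ∅ ∨ s = Set.univ := by
  rw [Set.Definable₁, Set.empty_definable_iff] at h
  obtain ⟨φ, hφ⟩ := h
  rcases Set.eq_empty_or_nonempty s with he | ⟨a, ha⟩
  · exact Or.inl he
  · right
    ext b
    simp only [Set.mem_univ, iff_true]
    have key : ∀ c : ℤ, φ.Realize (fun _ : Fin 1 => c + (b - a)) ↔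
        φ.Realize (fun _ : Fin 1 => c) := by
      intro c
      haveI : Language.order.OrderedStructure ℤ := ⟨fun _ => Iff.rfl⟩
      have := StrongHomClass.realize_formula
        (g := (OrderIso.addRight (b - a) : ℤ ≃o ℤ)) (L := Language.order)
        φ (v := fun _ : Fin 1 => c)
      simpa only [Function.comp_def, OrderIso.addRight_apply] using this
    have ha' : (fun _ : Fin 1 => a) ∈ {x : Fin 1 → ℤ | x 0 ∈ s} := ha
    rw [hφ] at ha'
    have hb : φ.Realize (fun _ : Fin 1 => b) := by
      have := (key a).mpr ha'
      simpa using this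
    have : (fun _ : Fin 1 => b) ∈ {x : Fin 1 → ℤ | x 0 ∈ s} := by rw [hφ]; exact hb
    simpa using this
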